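/- arXiv:1903.08162 — 2 statements merged into one kernel-verified Lean document; each statement's English description precedes it below -/
import Mathlib

section
/- For every complex ν, the k-th derivative of the Hermite function satisfies d^k/dx^k H_ν(x) = 2^k (−1)^k (−ν)_k H_{ν−k}(x), i.e. d^k/dx^k H_ν(x) = 2^k ν(ν−1)⋯(ν−k+1) H_{ν−k}(x). -/
/-- Pochhammer symbol `(x)_k` (rising factorial). -/
noncomputable def ascp (x : ℂ) (k : ℕ) : ℂ := (ascPochhammer ℂ k).eval x

/-- Kummer confluent hypergeometric function `₁F₁(a; b; x)`. -/
noncomputable def F11 (a b x : ℂ) : ℂ :=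
  ∑' k : ℕ, ascp a k / ascp b k * x ^ k / (Nat.factorial k : ℂ)

/-- Hermite function of complex degree `ν`. -/
noncomputable def HermiteF (ν x : ℂ) : ℂ :=
  (2 : ℂ) ^ ν * (Real.sqrt Real.pi : ℂ) *
    (F11 (-ν / 2) (1 / 2) (x ^ 2) / Complex.Gamma ((1 - ν) / 2)
      - 2 * x * F11 ((1 - ν) / 2) (3 / 2) (x ^ 2) / Complex.Gamma (-ν / 2))


lemma ascp_succ_right (x : ℂ) (k : ℕ) : ascp x (k+1) = ascp x k * (x + k) := by
  simp [ascp, ascPochhammer_succ_right]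

lemma ascp_succ_left (x : ℂ) (k : ℕ) : ascp x (k+1) = x * ascp (x+1) k := by
  simp [ascp, ascPochhammer_succ_left, Polynomial.eval_comp]

lemma ascp_eq_prod (x : ℂ) (k : ℕ) : ascp x k = ∏ j ∈ Finset.range k, (x + j) := by
  induction k with
  | zero => simp [ascp]
  | succ n ih => rw [ascp_succ_right, ih, Finset.prod_range_succ]

lemma fact_prod (k : ℕ) : ((k.factorial : ℝ)) = ∏ j ∈ Finset.range k, ((j:ℝ)+1) := by
  rw [← Finset.prod_range_add_one_eq_factorial]; push_cast; ring

lemma ascp_lower {r : ℝ} (hr : (1:ℝ)/2 ≤ r) (k : ℕ) :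
    (k.factorial : ℝ) / 2^k ≤ ‖ascp (r:ℂ) k‖ := by
  rw [ascp_eq_prod, norm_prod]
  have h1 : ∀ j ∈ Finset.range k, ((j:ℝ)+1)/2 ≤ ‖(r:ℂ) + (j:ℕ)‖ := by
    intro j _
    have : (r:ℂ) + (j:ℕ) = ((r + j : ℝ) : ℂ) := by push_cast; ring
    rw [this, Complex.norm_real, Real.norm_eq_abs]
    have : (0:ℝ) ≤ r + j := by positivity
    rw [abs_of_nonneg this]
    have : (0:ℝ) ≤ (j:ℝ) := Nat.cast_nonneg j
    linarith
  calc (k.factorial : ℝ) / 2^k = ∏ j ∈ Finset.range k, ((j:ℝ)+1)/2 := by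
        rw [Finset.prod_div_distrib, ← fact_prod]; simp [div_eq_div_iff]
    _ ≤ ∏ j ∈ Finset.range k, ‖(r:ℂ) + (j:ℕ)‖ :=
        Finset.prod_le_prod (fun j _ => by positivity) h1

lemma ascp_upper (a : ℂ) (k : ℕ) :
    ‖ascp a k‖ ≤ (2^(⌈‖a‖⌉₊))^k * (k.factorial : ℝ) := by
  set m : ℕ := ⌈‖a‖⌉₊
  rw [ascp_eq_prod]
  calc ‖∏ j ∈ Finset.range k, (a + j)‖ = ∏ j ∈ Finset.range k, ‖a + (j:ℕ)‖ := norm_prod _ _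
    _ ≤ ∏ j ∈ Finset.range k, ((2:ℝ)^m * ((j:ℝ)+1)) := by
        apply Finset.prod_le_prod (fun j _ => norm_nonneg _)
        intro j _
        calc ‖a + (j:ℕ)‖ ≤ ‖a‖ + ‖((j:ℕ):ℂ)‖ := norm_add_le _ _
          _ = ‖a‖ + (j:ℝ) := by simp
          _ ≤ (m:ℝ) + (j:ℝ) := by
              have := Nat.le_ceil ‖a‖; linarith
          _ ≤ 2^m * ((j:ℝ)+1) := by
              have h1 : (m:ℝ) ≤ 2^m := by
                have : m < 2^m := Nat.lt_two_pow_self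
                calc (m:ℝ) ≤ ((2^m : ℕ):ℝ) := by exact_mod_cast this.le
                  _ = 2^m := by push_cast; ring
              have h3 : (1:ℝ) ≤ 2^m := one_le_pow₀ (by norm_num)
              have h2 : (j:ℝ) ≤ 2^m * (j:ℝ) :=
                le_mul_of_one_le_left (Nat.cast_nonneg j) h3
              nlinarith
    _ = (2^m)^k * (k.factorial : ℝ) := by
        rw [Finset.prod_mul_distrib, Finset.prod_const, ← fact_prod, Finset.card_range]

noncomputable def hc (a b : ℂ) (k : ℕ) : ℂ := ascp a k / (ascp b k * (Nat.factorial k : ℂ))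

lemma ascp_real_ne_zero {r : ℝ} (hr : (1:ℝ)/2 ≤ r) (k : ℕ) : ascp (r:ℂ) k ≠ 0 := by
  have h := ascp_lower hr k
  have h2 : (0:ℝ) < (k.factorial : ℝ) / 2^k := by positivity
  intro h0
  rw [h0, norm_zero] at h
  linarith

lemma hc_norm_le {r : ℝ} (hr : (1:ℝ)/2 ≤ r) (a : ℂ) (k : ℕ) :
    ‖hc a (r:ℂ) k‖ ≤ ((2:ℝ)^(⌈‖a‖⌉₊+1))^k / (k.factorial : ℝ) := by
  set m : ℕ := ⌈‖a‖⌉₊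
  have hfk : (0:ℝ) < (k.factorial : ℝ) := by positivity
  have hlow := ascp_lower hr k
  have hlow' : (0:ℝ) < (k.factorial : ℝ) / 2^k := by positivity
  have hup := ascp_upper a k
  rw [hc, norm_div, norm_mul, Complex.norm_natCast]
  calc ‖ascp a k‖ / (‖ascp (r:ℂ) k‖ * (k.factorial:ℝ))
      ≤ ((2:ℝ)^m)^k * (k.factorial:ℝ) / (((k.factorial:ℝ)/2^k) * (k.factorial:ℝ)) := by
        apply div_le_div₀ (by positivity) hup (by positivity)
        have := norm_nonneg (ascp (r:ℂ) k)
        exact mul_le_mul_of_nonneg_right hlow hfk.le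
    _ = ((2:ℝ)^(m+1))^k / (k.factorial:ℝ) := by
        field_simp
        ring


lemma F11_eq_tsum (a b x : ℂ) : F11 a b x = ∑' k, hc a b k * x^k := by
  unfold F11 hc
  exact tsum_congr fun k => by ring

lemma summable_hc_pow {r : ℝ} (hr : (1:ℝ)/2 ≤ r) (a x : ℂ) :
    Summable fun k => hc a (r:ℂ) k * x^k := by
  set B : ℝ := (2:ℝ)^(⌈‖a‖⌉₊+1)
  have hsum : Summable (fun k : ℕ => (B * ‖x‖)^k / (k.factorial : ℝ)) :=
    Real.summable_pow_div_factorial _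
  apply Summable.of_norm_bounded hsum
  intro k
  rw [norm_mul, norm_pow]
  calc ‖hc a (r:ℂ) k‖ * ‖x‖^k ≤ (B^k / (k.factorial:ℝ)) * ‖x‖^k := by
        apply mul_le_mul_of_nonneg_right (hc_norm_le hr a k) (by positivity)
    _ = (B * ‖x‖)^k / (k.factorial:ℝ) := by rw [mul_pow]; ring

lemma summable_deriv_bound (B R : ℝ) (hB : 0 ≤ B) (hR : 1 ≤ R) :
    Summable fun k : ℕ => (k:ℝ) * (B^k / (k.factorial:ℝ)) * R^(k-1) := by
  have hsum : Summable (fun k : ℕ => (2*B*R)^k / (k.factorial : ℝ)) :=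
    Real.summable_pow_div_factorial _
  apply Summable.of_nonneg_of_le (fun k => by positivity) ?_ hsum
  intro k
  have hk2 : (k:ℝ) ≤ 2^k := by
    have : k < 2^k := Nat.lt_two_pow_self
    calc (k:ℝ) ≤ ((2^k : ℕ):ℝ) := by exact_mod_cast this.le
      _ = 2^k := by push_cast; ring
  have hRk : R^(k-1) ≤ R^k := pow_le_pow_right₀ hR (Nat.sub_le k 1)
  calc (k:ℝ) * (B^k / (k.factorial:ℝ)) * R^(k-1)
      ≤ 2^k * (B^k / (k.factorial:ℝ)) * R^k := by
        apply mul_le_mul (mul_le_mul_of_nonneg_right hk2 (by positivity)) hRk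
          (by positivity) (by positivity)
    _ = (2*B*R)^k / (k.factorial:ℝ) := by rw [mul_pow, mul_pow]; ring

lemma ofReal_ne_zero_of_half {r : ℝ} (hr : (1:ℝ)/2 ≤ r) : (r:ℂ) ≠ 0 := by
  simp only [ne_eq, Complex.ofReal_eq_zero]
  intro h; rw [h] at hr; linarith

lemma ascp_shift_ne {r : ℝ} (hr : (1:ℝ)/2 ≤ r) (k : ℕ) : ascp ((r:ℂ)+1) k ≠ 0 := by
  have : (r:ℂ)+1 = ((r+1 : ℝ) : ℂ) := by push_cast; ring
  rw [this]
  exact ascp_real_ne_zero (by linarith) k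

lemma hc_succ {r : ℝ} (hr : (1:ℝ)/2 ≤ r) (a : ℂ) (k : ℕ) :
    ((k:ℂ)+1) * hc a (r:ℂ) (k+1) = (a/(r:ℂ)) * hc (a+1) ((r:ℂ)+1) k := by
  unfold hc
  rw [ascp_succ_left, ascp_succ_left, Nat.factorial_succ]
  have h1 : (r:ℂ) ≠ 0 := ofReal_ne_zero_of_half hr
  have h2 : ascp ((r:ℂ)+1) k ≠ 0 := ascp_shift_ne hr k
  have h3 : ((k.factorial : ℕ) : ℂ) ≠ 0 := Nat.cast_ne_zero.mpr k.factorial_ne_zero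
  have h4 : ((k:ℂ)+1) ≠ 0 := by
    have := Nat.cast_add_one_ne_zero (R := ℂ) k
    simpa using this
  push_cast
  field_simp

lemma hasDerivAt_G {r : ℝ} (hr : (1:ℝ)/2 ≤ r) (a : ℂ) (x : ℂ) :
    HasDerivAt (fun y => ∑' k, hc a (r:ℂ) k * y^k)
      ((a/(r:ℂ)) * ∑' k, hc (a+1) ((r:ℂ)+1) k * x^k) x := by
  set b : ℂ := (r:ℂ)
  set B : ℝ := (2:ℝ)^(⌈‖a‖⌉₊+1) with hB
  set R : ℝ := ‖x‖ + 1 with hRdef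
  have hR1 : 1 ≤ R := by have := norm_nonneg x; rw [hRdef]; linarith
  have hR0 : 0 < R := by linarith
  have hu : Summable (fun k : ℕ => (k:ℝ) * (B^k / (k.factorial:ℝ)) * R^(k-1)) :=
    summable_deriv_bound B R (by positivity) hR1
  have hg : ∀ (k : ℕ) (y : ℂ), y ∈ Metric.ball (0:ℂ) R →
      HasDerivAt (fun z => hc a b k * z^k) ((k:ℂ) * hc a b k * y^(k-1)) y := by
    intro k y _
    have := (hasDerivAt_pow k y).const_mul (hc a b k)
    refine this.congr_deriv ?_
    ring
  have hg' : ∀ (k : ℕ) (y : ℂ), y ∈ Metric.ball (0:ℂ) R →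
      ‖(k:ℂ) * hc a b k * y^(k-1)‖ ≤ (k:ℝ) * (B^k / (k.factorial:ℝ)) * R^(k-1) := by
    intro k y hy
    rw [Metric.mem_ball, dist_zero_right] at hy
    rw [norm_mul, norm_mul, Complex.norm_natCast, norm_pow]
    apply mul_le_mul
    · exact mul_le_mul_of_nonneg_left (hc_norm_le hr a k) (Nat.cast_nonneg k)
    · exact pow_le_pow_left₀ (norm_nonneg y) hy.le _
    · positivity
    · positivity
  have hx : x ∈ Metric.ball (0:ℂ) R := by
    rw [Metric.mem_ball, dist_zero_right]; simp [hRdef]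
  have h0 : (0:ℂ) ∈ Metric.ball (0:ℂ) R := Metric.mem_ball_self hR0
  have main := hasDerivAt_tsum_of_isPreconnected hu Metric.isOpen_ball
    (convex_ball (0:ℂ) R).isPreconnected hg hg' h0 (summable_hc_pow hr a 0) hx
  refine main.congr_deriv (Eq.symm ?_)
  have hsum' : Summable (fun k : ℕ => (k:ℂ) * hc a b k * x^(k-1)) :=
    Summable.of_norm_bounded hu (fun k => hg' k x hx)
  rw [Summable.tsum_eq_zero_add hsum']
  simp only [Nat.cast_zero, zero_mul, zero_add]
  rw [← tsum_mul_left]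
  apply tsum_congr
  intro k
  symm
  have : ((k:ℕ)+1 : ℂ) * hc a b (k+1) = (a/b) * hc (a+1) (b+1) k := by
    have := hc_succ hr a k
    push_cast at this ⊢
    exact this
  calc ((k+1:ℕ):ℂ) * hc a b (k+1) * x^((k+1)-1)
      = (((k:ℕ)+1:ℂ) * hc a b (k+1)) * x^k := by push_cast; ring
    _ = (a/b) * hc (a+1) (b+1) k * x^k := by rw [this]
    _ = a / b * (hc (a+1) (b+1) k * x^k) := by ring



lemma hc_coeff_id (a : ℂ) (n : ℕ) :
    hc a (1/2) (n+1) = hc a (3/2) (n+1) + 4*a/3 * hc (a+1) (5/2) n := by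
  have c32 : (3/2:ℂ) = (((3:ℝ)/2 : ℝ) : ℂ) := by norm_num
  have c52 : (5/2:ℂ) = (((5:ℝ)/2 : ℝ) : ℂ) := by norm_num
  have hP : ascp (3/2) n ≠ 0 := by rw [c32]; exact ascp_real_ne_zero (by norm_num) n
  have hQ : ascp (5/2) n ≠ 0 := by rw [c52]; exact ascp_real_ne_zero (by norm_num) n
  have h1 := ascp_succ_right (3/2:ℂ) n
  have h2 := ascp_succ_left (3/2:ℂ) n
  have e : (3/2:ℂ) + 1 = 5/2 := by norm_num
  have e2 : (1/2:ℂ) + 1 = 3/2 := by norm_num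
  rw [e] at h2
  have hrel : ascp (3/2:ℂ) n * ((3:ℂ)/2 + n) = (3/2) * ascp (5/2) n := by
    rw [← h1, h2]
  have hkf : ((n.factorial : ℕ) : ℂ) ≠ 0 := Nat.cast_ne_zero.mpr n.factorial_ne_zero
  have hn1 : ((n:ℂ)+1) ≠ 0 := by
    have := Nat.cast_add_one_ne_zero (R := ℂ) n
    simpa using this
  have h32n : ((3:ℂ)/2 + n) ≠ 0 := by
    have he : ((3:ℂ)/2 + n) = (((3/2 + n : ℝ)) : ℂ) := by push_cast; ring
    rw [he]
    simp only [ne_eq, Complex.ofReal_eq_zero]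
    positivity
  set A := ascp (a+1) n with hA
  set P := ascp (3/2:ℂ) n with hPd
  set F := ((n.factorial : ℕ) : ℂ) with hF
  set D : ℂ := P * ((3:ℂ)/2 + n) * (((n:ℂ)+1) * F) with hD
  have hDne : D ≠ 0 := mul_ne_zero (mul_ne_zero hP h32n) (mul_ne_zero hn1 hkf)
  have t1 : hc a (1/2) (n+1) = (2*((3:ℂ)/2+n) * (a * A)) / D := by
    unfold hc
    rw [ascp_succ_left a n, ascp_succ_left (1/2:ℂ) n, e2, Nat.factorial_succ]
    push_cast
    rw [div_eq_div_iff (by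
      exact mul_ne_zero (mul_ne_zero (by norm_num) hP) (mul_ne_zero hn1 hkf)) hDne]
    ring
  have t2 : hc a (3/2) (n+1) = (a * A) / D := by
    unfold hc
    rw [ascp_succ_left a n, ascp_succ_left (3/2:ℂ) n, e, Nat.factorial_succ]
    push_cast
    rw [div_eq_div_iff (by
      apply mul_ne_zero (mul_ne_zero (by norm_num) hQ) (mul_ne_zero hn1 hkf)) hDne]
    have : ascp (5/2:ℂ) n = 2/3 * (P * ((3:ℂ)/2 + n)) := by rw [hrel]; ring
    rw [this]
    ring
  have t3 : hc (a+1) (5/2) n = (3/2*((n:ℂ)+1) * A) / D := by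
    unfold hc
    rw [div_eq_div_iff (mul_ne_zero hQ hkf) hDne]
    have : ascp (5/2:ℂ) n = 2/3 * (P * ((3:ℂ)/2 + n)) := by rw [hrel]; ring
    rw [this]
    ring
  rw [t1, t2, t3]
  ring

lemma cast32 : (((3:ℝ)/2 : ℝ) : ℂ) = (3/2:ℂ) := by norm_num
lemma cast12 : (((1:ℝ)/2 : ℝ) : ℂ) = (1/2:ℂ) := by norm_num
lemma cast52 : (((5:ℝ)/2 : ℝ) : ℂ) = (5/2:ℂ) := by norm_num

lemma summable_b12 (a z : ℂ) : Summable fun k => hc a (1/2:ℂ) k * z^k := by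
  have := summable_hc_pow (r := 1/2) (by norm_num) a z
  rwa [cast12] at this

lemma summable_b32 (a z : ℂ) : Summable fun k => hc a (3/2:ℂ) k * z^k := by
  have := summable_hc_pow (r := 3/2) (by norm_num) a z
  rwa [cast32] at this

lemma summable_b52 (a z : ℂ) : Summable fun k => hc a (5/2:ℂ) k * z^k := by
  have := summable_hc_pow (r := 5/2) (by norm_num) a z
  rwa [cast52] at this

lemma contiguous (a z : ℂ) :
    F11 a (1/2) z = F11 a (3/2) z + 4*a/3 * (z * F11 (a+1) (5/2) z) := by
  rw [F11_eq_tsum, F11_eq_tsum, F11_eq_tsum]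
  set w : ℕ → ℂ := fun k => match k with
    | 0 => 0
    | (n+1) => 4*a/3 * (hc (a+1) (5/2) n * z^(n+1)) with hwdef
  have s2 : Summable fun k => hc a (3/2:ℂ) k * z^k := summable_b32 a z
  have s3 : Summable fun k => hc (a+1) (5/2:ℂ) k * z^k := summable_b52 (a+1) z
  have hw1 : (fun n => w (n+1)) = fun n => (4*a/3*z) * (hc (a+1) (5/2) n * z^n) := by
    funext n
    show 4*a/3 * (hc (a+1) (5/2) n * z^(n+1)) = _
    ring
  have sw' : Summable fun n => w (n+1) := by rw [hw1]; exact s3.mul_left _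
  have sw : Summable w := (summable_nat_add_iff 1).mp sw'
  have hterm : ∀ k, hc a (1/2) k * z^k = hc a (3/2) k * z^k + w k := by
    intro k
    cases k with
    | zero =>
        show hc a (1/2) 0 * z^0 = hc a (3/2) 0 * z^0 + 0
        simp [hc, ascp]
    | succ n =>
        show _ = _ + 4*a/3 * (hc (a+1) (5/2) n * z^(n+1))
        rw [hc_coeff_id a n]
        ring
  calc ∑' k, hc a (1/2) k * z^k = ∑' k, (hc a (3/2) k * z^k + w k) := tsum_congr hterm
    _ = (∑' k, hc a (3/2) k * z^k) + ∑' k, w k := Summable.tsum_add s2 sw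
    _ = (∑' k, hc a (3/2) k * z^k) + 4*a/3 * (z * ∑' k, hc (a+1) (5/2) k * z^k) := by
        congr 1
        rw [Summable.tsum_eq_zero_add sw]
        show (0:ℂ) + ∑' n, w (n+1) = _
        rw [zero_add, hw1, tsum_mul_left]
        ring

lemma inv_Gamma_eq (s : ℂ) : (Complex.Gamma s)⁻¹ = s * (Complex.Gamma (s+1))⁻¹ := by
  by_cases h : s = 0
  · simp [h, Complex.Gamma_zero]
  · rw [Complex.Gamma_add_one s h]
    by_cases hG : Complex.Gamma s = 0
    · simp [hG]
    · rw [mul_inv]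
      field_simp

lemma hasDerivAt_F11 {r : ℝ} (hr : (1:ℝ)/2 ≤ r) (a x : ℂ) :
    HasDerivAt (F11 a (r:ℂ)) ((a/(r:ℂ)) * ∑' k, hc (a+1) ((r:ℂ)+1) k * x^k) x := by
  have hfun : F11 a (r:ℂ) = fun y => ∑' k, hc a (r:ℂ) k * y^k :=
    funext fun y => F11_eq_tsum a _ y
  rw [hfun]
  exact hasDerivAt_G hr a x

lemma hasDerivAt_F11_12 (a x : ℂ) :
    HasDerivAt (F11 a (1/2)) ((a/(1/2:ℂ)) * F11 (a+1) (3/2) x) x := by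
  have h := hasDerivAt_F11 (r := 1/2) (by norm_num) a x
  rw [cast12] at h
  have e : (((1:ℝ)/2 : ℝ) : ℂ) + 1 = (3/2:ℂ) := by norm_num
  rw [show ((1/2:ℂ)+1) = (3/2:ℂ) by norm_num] at h
  rwa [F11_eq_tsum (a+1) (3/2) x]

lemma hasDerivAt_F11_32 (a x : ℂ) :
    HasDerivAt (F11 a (3/2)) ((a/(3/2:ℂ)) * F11 (a+1) (5/2) x) x := by
  have h := hasDerivAt_F11 (r := 3/2) (by norm_num) a x
  rw [cast32] at h
  rw [show ((3/2:ℂ)+1) = (5/2:ℂ) by norm_num] at h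
  rwa [F11_eq_tsum (a+1) (5/2) x]

lemma hasDerivAt_F11_12_sq (a x : ℂ) :
    HasDerivAt (fun y => F11 a (1/2) (y^2))
      ((a/(1/2:ℂ)) * F11 (a+1) (3/2) (x^2) * (2*x)) x := by
  have h2 : HasDerivAt (fun y : ℂ => y^2) (2*x) x := by
    simpa using hasDerivAt_pow 2 x
  exact (hasDerivAt_F11_12 a (x^2)).comp x h2

lemma hasDerivAt_F11_32_sq (a x : ℂ) :
    HasDerivAt (fun y => F11 a (3/2) (y^2))
      ((a/(3/2:ℂ)) * F11 (a+1) (5/2) (x^2) * (2*x)) x := by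
  have h2 : HasDerivAt (fun y : ℂ => y^2) (2*x) x := by
    simpa using hasDerivAt_pow 2 x
  exact (hasDerivAt_F11_32 a (x^2)).comp x h2

lemma hermite_hasDerivAt (ν x : ℂ) :
    HasDerivAt (HermiteF ν) (2*ν*HermiteF (ν-1) x) x := by
  set K : ℂ := (2:ℂ)^ν * (Real.sqrt Real.pi : ℂ) with hK
  have hu1 := hasDerivAt_F11_12_sq (-ν/2) x
  have hu2 := hasDerivAt_F11_32_sq ((1-ν)/2) x
  have hP : HasDerivAt (fun y => F11 (-ν/2) (1/2) (y^2) / Complex.Gamma ((1-ν)/2))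
      (((-ν/2)/(1/2:ℂ)) * F11 (-ν/2+1) (3/2) (x^2) * (2*x) / Complex.Gamma ((1-ν)/2)) x :=
    hu1.div_const _
  have h2y : HasDerivAt (fun y : ℂ => 2*y) 2 x := by
    simpa using (hasDerivAt_id x).const_mul (2:ℂ)
  have hQ : HasDerivAt (fun y => 2*y*F11 ((1-ν)/2) (3/2) (y^2))
      (2 * F11 ((1-ν)/2) (3/2) (x^2)
        + 2*x*(((1-ν)/2/(3/2:ℂ)) * F11 ((1-ν)/2+1) (5/2) (x^2) * (2*x))) x :=
    h2y.mul hu2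
  have hQ' := hQ.div_const (Complex.Gamma (-ν/2))
  have hH := (hP.sub hQ').const_mul K
  have hfun : HermiteF ν = fun y => K *
      (F11 (-ν/2) (1/2) (y^2) / Complex.Gamma ((1-ν)/2)
        - 2*y*F11 ((1-ν)/2) (3/2) (y^2) / Complex.Gamma (-ν/2)) := rfl
  rw [hfun]
  refine hH.congr_deriv (Eq.symm ?_)
  -- now the value identity
  have e1 : -(ν-1)/2 = (1-ν)/2 := by ring
  have e2 : (1-(ν-1))/2 = -ν/2+1 := by ring
  have hcont := contiguous ((1-ν)/2) (x^2)
  have hg : (Complex.Gamma (-ν/2))⁻¹ = (-ν/2) * (Complex.Gamma (-ν/2+1))⁻¹ :=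
    inv_Gamma_eq (-ν/2)
  have hpow : (2:ℂ)^(ν-1:ℂ) = (2:ℂ)^ν / (2:ℂ) := by
    rw [Complex.cpow_sub ν 1 two_ne_zero, Complex.cpow_one]
  unfold HermiteF
  rw [e1, e2, hpow, hcont, hK]
  simp only [div_eq_mul_inv] at hg ⊢
  simp only [hg]
  ring

/-- `dᵏ/dxᵏ H_ν(x) = 2ᵏ (−1)ᵏ (−ν)_k H_{ν−k}(x) = 2ᵏ ν(ν−1)⋯(ν−k+1) H_{ν−k}(x)`. -/
theorem hermite_iterated_deriv (ν : ℂ) (k : ℕ) (x : ℂ) :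
    iteratedDeriv k (HermiteF ν) x
      = 2 ^ k * (-1) ^ k * ascp (-ν) k * HermiteF (ν - k) x
    ∧ iteratedDeriv k (HermiteF ν) x
      = 2 ^ k * (∏ j ∈ Finset.range k, (ν - j)) * HermiteF (ν - k) x := by
  have main : ∀ y : ℂ, iteratedDeriv k (HermiteF ν) y
      = 2 ^ k * (∏ j ∈ Finset.range k, (ν - j)) * HermiteF (ν - k) y := by
    induction k with
    | zero => intro y; simp
    | succ n ih =>
        intro y
        rw [iteratedDeriv_succ]
        have hfn : iteratedDeriv n (HermiteF ν)
            = fun z => 2^n * (∏ j ∈ Finset.range n, (ν - j)) * HermiteF (ν - n) z :=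
          funext ih
        rw [hfn]
        have hd : HasDerivAt
            (fun z => 2^n * (∏ j ∈ Finset.range n, (ν - j)) * HermiteF (ν - n) z)
            (2^n * (∏ j ∈ Finset.range n, (ν - j))
              * (2*(ν - n)*HermiteF (ν - n - 1) y)) y :=
          (hermite_hasDerivAt (ν - n) y).const_mul _
        rw [hd.deriv, Finset.prod_range_succ]
        have e1 : ((n+1:ℕ):ℂ) = (n:ℂ)+1 := by push_cast; ring
        have e2 : ν - ((n:ℂ)+1) = ν - n - 1 := by ring
        rw [e1, e2]
        ring
  refine ⟨?_, main x⟩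
  rw [main x]
  have hconst : ((-1:ℂ))^k = ∏ _j ∈ Finset.range k, (-1:ℂ) := by
    rw [Finset.prod_const, Finset.card_range]
  have hpoch : ascp (-ν) k = (-1)^k * ∏ j ∈ Finset.range k, (ν - j) := by
    rw [ascp_eq_prod, hconst, ← Finset.prod_mul_distrib]
    exact Finset.prod_congr rfl fun j _ => by ring
  have hsq : ((-1:ℂ))^k * (-1)^k = 1 := by rw [← mul_pow]; norm_num
  rw [hpoch, show (2:ℂ)^k * (-1)^k * ((-1)^k * ∏ j ∈ Finset.range k, (ν - j))
      = 2^k * (((-1:ℂ))^k * (-1)^k * ∏ j ∈ Finset.range k, (ν - j)) from by ring, hsq]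
  ring
end

section
/- Let N ∈ ℕ, b₀,…,b_N ∈ ℂ with b_N ≠ 0, and define the degree-N polynomial g(ξ) = Σ_{n=0}^N Σ_{k=0}^n b_n [C(n,k)/(α₁)_k] ξ(ξ−1)⋯(ξ−k+1), with roots −λ₁,…,−λ_N (counted with multiplicity). Then Σ_{n=0}^N b_n ₚF_q(α₁+n, α₂,…,αₚ; γ; z) = (b_N/(α₁)_N)·(θ+λ₁)⋯(θ+λ_N) F(z), where θ = z d/dz and F(z) = ₚF_q(α₁,…,αₚ; γ; z). In particular, if no λ_i is a nonpositive integer, this equals (b_N/(α₁)_N)·λ₁⋯λ_N · ₚ₊ₙF_{q+N}(α₁,…,αₚ, λ₁+1,…,λ_N+1; γ₁,…,γ_q, λ₁,…,λ_N; z). -/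
/-- The generalized hypergeometric function `ₚF_q(a; b; z)` as a formal power series:
its `k`-th coefficient is `(a₁)_k ⋯ (aₚ)_k / ((b₁)_k ⋯ (b_q)_k k!)`. -/
noncomputable def pFq (a b : List ℂ) : PowerSeries ℂ :=
  PowerSeries.mk fun k =>
    (a.map fun x => ascp x k).prod / ((b.map fun x => ascp x k).prod * (Nat.factorial k : ℂ))

/-- The Euler operator `θ = z d/dz` on formal power series. -/
noncomputable def thetaOp (F : PowerSeries ℂ) : PowerSeries ℂ :=
  PowerSeries.X * PowerSeries.derivativeFun F

/-- The operator `(θ + λ₁)⋯(θ + λ_N)` for a list of shifts. -/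
noncomputable def thetaShiftProd : List ℂ → PowerSeries ℂ → PowerSeries ℂ
  | [], F => F
  | l :: ls, F => thetaOp (thetaShiftProd ls F) + l • thetaShiftProd ls F

open Finset PowerSeries

lemma ascp_zero (x : ℂ) : ascp x 0 = 1 := by simp [ascp]

lemma ascp_succ (x : ℂ) (k : ℕ) : ascp x (k + 1) = ascp x k * (x + k) :=
  ascPochhammer_succ_eval k x

lemma ascp_left (x : ℂ) (k : ℕ) : ascp x (k + 1) = x * ascp (x + 1) k := by
  rw [ascp, ascp, ascPochhammer_succ_left, Polynomial.X_mul, Polynomial.eval_mul,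
    Polynomial.eval_comp, Polynomial.eval_X, Polynomial.eval_add, Polynomial.eval_X,
    Polynomial.eval_one, mul_comm]

lemma ascp_ne_zero {x : ℂ} (h : ∀ m : ℕ, x ≠ -(m : ℂ)) (k : ℕ) : ascp x k ≠ 0 := by
  induction k with
  | zero => simp [ascp_zero]
  | succ k ih =>
    rw [ascp_succ]
    exact mul_ne_zero ih fun hx => h k (eq_neg_of_add_eq_zero_left hx)

lemma key (α : ℂ) (hα : ∀ m : ℕ, α ≠ -(m : ℂ)) (n k : ℕ) :
    ascp (α + n) k = ascp α k *
      ∑ j ∈ range (n + 1), (n.choose j : ℂ) / ascp α j * ∏ i ∈ range j, ((k : ℂ) - i) := by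
  induction n with
  | zero => simp [ascp_zero]
  | succ n ih =>
    have hj0 : ∀ j : ℕ, ascp α j ≠ 0 := ascp_ne_zero hα
    have hαj : ∀ j : ℕ, α + (j : ℂ) ≠ 0 := fun j h => hα j (eq_neg_of_add_eq_zero_left h)
    have tele : ∀ j ∈ range (n + 1),
        (α + n) * ((n.choose j : ℂ) * (∏ i ∈ range (j + 1), ((k : ℂ) - i)) / ascp α (j + 1))
          - (k : ℂ) * ((n.choose j : ℂ) / ascp α j * ∏ i ∈ range j, ((k : ℂ) - i))
        = (fun j : ℕ => (j : ℂ) * (n.choose j : ℂ) * (∏ i ∈ range j, ((k : ℂ) - i)) / ascp α j) (j + 1)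
          - (fun j : ℕ => (j : ℂ) * (n.choose j : ℂ) * (∏ i ∈ range j, ((k : ℂ) - i)) / ascp α j) j := by
      intro j hj
      have hjn : j ≤ n := Nat.lt_succ_iff.mp (mem_range.mp hj)
      have hc : (n.choose (j + 1) : ℂ) = (n.choose j : ℂ) * ((n : ℂ) - j) / ((j : ℂ) + 1) := by
        rw [eq_div_iff (Nat.cast_add_one_ne_zero (R := ℂ) j)]
        have h2 := congrArg (Nat.cast : ℕ → ℂ) (Nat.choose_succ_right_eq n j)
        push_cast [Nat.cast_sub hjn] at h2
        linear_combination h2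
      simp only []
      rw [prod_range_succ, ascp_succ, Nat.cast_add, Nat.cast_one, hc]
      have h1 := hj0 j
      have h2 := hαj j
      have h3 : ((j : ℂ) + 1) ≠ 0 := Nat.cast_add_one_ne_zero (R := ℂ) j
      field_simp
      ring
    have hT : (α + n) * (∑ j ∈ range (n + 1),
          (n.choose j : ℂ) * (∏ i ∈ range (j + 1), ((k : ℂ) - i)) / ascp α (j + 1))
        = (k : ℂ) * ∑ j ∈ range (n + 1),
            (n.choose j : ℂ) / ascp α j * ∏ i ∈ range j, ((k : ℂ) - i) := by
      have h0 := Finset.sum_range_sub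
        (fun j : ℕ => (j : ℂ) * (n.choose j : ℂ) * (∏ i ∈ range j, ((k : ℂ) - i)) / ascp α j) (n + 1)
      have h1 : ∑ j ∈ range (n + 1),
          ((α + n) * ((n.choose j : ℂ) * (∏ i ∈ range (j + 1), ((k : ℂ) - i)) / ascp α (j + 1))
            - (k : ℂ) * ((n.choose j : ℂ) / ascp α j * ∏ i ∈ range j, ((k : ℂ) - i))) = 0 := by
        rw [Finset.sum_congr rfl tele, h0]
        simp [Nat.choose_succ_self]
      rw [Finset.sum_sub_distrib, ← Finset.mul_sum, ← Finset.mul_sum, sub_eq_zero] at h1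
      exact h1
    have hS : ∑ j ∈ range (n + 1 + 1), ((n + 1).choose j : ℂ) / ascp α j * ∏ i ∈ range j, ((k : ℂ) - i)
        = (∑ j ∈ range (n + 1), (n.choose j : ℂ) * (∏ i ∈ range (j + 1), ((k : ℂ) - i)) / ascp α (j + 1))
          + ∑ j ∈ range (n + 1), (n.choose j : ℂ) / ascp α j * ∏ i ∈ range j, ((k : ℂ) - i) := by
      have hSn : ∑ j ∈ range (n + 1), (n.choose j : ℂ) / ascp α j * ∏ i ∈ range j, ((k : ℂ) - i)
          = (∑ j ∈ range (n + 1), (n.choose (j + 1) : ℂ) / ascp α (j + 1) * ∏ i ∈ range (j + 1), ((k : ℂ) - i))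
            + (n.choose 0 : ℂ) / ascp α 0 * ∏ i ∈ range 0, ((k : ℂ) - i) := by
        have e1 := Finset.sum_range_succ'
          (fun j : ℕ => (n.choose j : ℂ) / ascp α j * ∏ i ∈ range j, ((k : ℂ) - i)) (n + 1)
        rw [Finset.sum_range_succ
          (fun j : ℕ => (n.choose j : ℂ) / ascp α j * ∏ i ∈ range j, ((k : ℂ) - i)) (n + 1)] at e1
        simp only [Nat.choose_succ_self, Nat.cast_zero, zero_div, zero_mul, add_zero] at e1
        exact e1
      rw [Finset.sum_range_succ'
        (fun j : ℕ => (((n + 1).choose j : ℕ) : ℂ) / ascp α j * ∏ i ∈ range j, ((k : ℂ) - i)) (n + 1)]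
      have hterm : ∀ j ∈ range (n + 1),
          (((n + 1).choose (j + 1) : ℕ) : ℂ) / ascp α (j + 1) * ∏ i ∈ range (j + 1), ((k : ℂ) - i)
          = (n.choose j : ℂ) * (∏ i ∈ range (j + 1), ((k : ℂ) - i)) / ascp α (j + 1)
            + (n.choose (j + 1) : ℂ) / ascp α (j + 1) * ∏ i ∈ range (j + 1), ((k : ℂ) - i) := by
        intro j _
        rw [Nat.choose_succ_succ]
        push_cast
        ring
      rw [Finset.sum_congr rfl hterm, Finset.sum_add_distrib, hSn]
      simp [ascp_zero]
      ring
    have hL : (α + n) * ascp (α + ((n + 1 : ℕ) : ℂ)) k = ascp (α + n) k * (α + n + k) := by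
      have hcast : (α : ℂ) + ((n + 1 : ℕ) : ℂ) = (α + n) + 1 := by push_cast; ring
      rw [hcast, ← ascp_left, ascp_succ]
    apply mul_left_cancel₀ (hαj n)
    rw [hL, ih, hS]
    linear_combination (-(ascp α k)) * hT

lemma coeff_thetaOp (F : PowerSeries ℂ) (m : ℕ) :
    PowerSeries.coeff (R := ℂ) m (thetaOp F) = (m : ℂ) * PowerSeries.coeff (R := ℂ) m F := by
  cases m with
  | zero => simp [thetaOp]
  | succ m =>
    rw [thetaOp, PowerSeries.coeff_succ_X_mul]
    change PowerSeries.coeff (R := ℂ) m (PowerSeries.derivative ℂ F) = _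
    rw [PowerSeries.coeff_derivative]
    push_cast
    ring

lemma coeff_thetaShiftProd (l : List ℂ) (F : PowerSeries ℂ) (m : ℕ) :
    PowerSeries.coeff (R := ℂ) m (thetaShiftProd l F)
      = (l.map fun x => (m : ℂ) + x).prod * PowerSeries.coeff (R := ℂ) m F := by
  induction l with
  | nil => simp [thetaShiftProd]
  | cons a l ih =>
    simp only [thetaShiftProd, map_add, coeff_thetaOp, ih, List.map_cons, List.prod_cons,
      LinearMap.map_smul, smul_eq_mul]
    ring

lemma scalar_sum (N : ℕ) (α : ℂ) (hα : ∀ m : ℕ, α ≠ -(m : ℂ)) (b : ℕ → ℂ) (lam : Fin N → ℂ)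
    (hroots : ∀ ξ : ℂ,
      ∑ n ∈ Finset.range (N + 1), ∑ k ∈ Finset.range (n + 1),
          b n * (n.choose k : ℂ) / ascp α k * ∏ j ∈ Finset.range k, (ξ - j)
        = b N / ascp α N * ∏ i : Fin N, (ξ + lam i)) (m : ℕ) :
    ∑ n ∈ range (N + 1), b n * ascp (α + n) m
      = b N / ascp α N * (∏ i : Fin N, ((m : ℂ) + lam i)) * ascp α m := by
  have h := hroots (m : ℂ)
  have step : ∀ n ∈ range (N + 1), b n * ascp (α + n) m
      = ascp α m * ∑ j ∈ range (n + 1),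
          b n * (n.choose j : ℂ) / ascp α j * ∏ i ∈ range j, ((m : ℂ) - i) := by
    intro n _
    rw [key α hα n m]
    simp only [Finset.mul_sum]
    exact Finset.sum_congr rfl fun j _ => by ring
  rw [Finset.sum_congr rfl step, ← Finset.mul_sum, h]
  ring

/-- an `(N+1)`-term contiguous combination
`Σ_{n=0}^N b_n ₚF_q(α₁+n, …; γ; z)` equals `(b_N/(α₁)_N)(θ+λ₁)⋯(θ+λ_N) F(z)`, where
`−λ₁,…,−λ_N` are the roots of the polynomial `g`; and, when no `λ_i` is a nonpositive
integer, it equals `(Σ b_k) · ₚ₊ₙF_{q+N}` with the extra parameter pairs `(λ_i+1; λ_i)`. -/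
theorem pFq_multi_term_combination (N : ℕ) (α₁ : ℂ) (αs γs : List ℂ) (b : ℕ → ℂ)
    (hbN : b N ≠ 0) (hα : ∀ m : ℕ, α₁ ≠ -(m : ℂ))
    (hγ : ∀ γ ∈ γs, ∀ m : ℕ, γ ≠ -(m : ℂ)) (lam : Fin N → ℂ)
    (hroots : ∀ ξ : ℂ,
      ∑ n ∈ Finset.range (N + 1), ∑ k ∈ Finset.range (n + 1),
          b n * (n.choose k : ℂ) / ascp α₁ k * ∏ j ∈ Finset.range k, (ξ - j)
        = b N / ascp α₁ N * ∏ i : Fin N, (ξ + lam i)) :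
    (∑ n ∈ Finset.range (N + 1), PowerSeries.C (R := ℂ) (b n) * pFq ((α₁ + n) :: αs) γs
      = PowerSeries.C (R := ℂ) (b N / ascp α₁ N)
          * thetaShiftProd (List.ofFn lam) (pFq (α₁ :: αs) γs))
    ∧ ((∀ i : Fin N, ∀ m : ℕ, lam i ≠ -(m : ℂ)) →
      ∑ n ∈ Finset.range (N + 1), PowerSeries.C (R := ℂ) (b n) * pFq ((α₁ + n) :: αs) γs
        = PowerSeries.C (R := ℂ) (b N / ascp α₁ N * ∏ i : Fin N, lam i)
            * pFq ((α₁ :: αs) ++ (List.ofFn lam).map (· + 1)) (γs ++ List.ofFn lam)) := by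
  have h1 : ∑ n ∈ Finset.range (N + 1), PowerSeries.C (R := ℂ) (b n) * pFq ((α₁ + n) :: αs) γs
      = PowerSeries.C (R := ℂ) (b N / ascp α₁ N)
          * thetaShiftProd (List.ofFn lam) (pFq (α₁ :: αs) γs) := by
    apply PowerSeries.ext
    intro m
    rw [map_sum]
    simp only [PowerSeries.coeff_C_mul, pFq, PowerSeries.coeff_mk, List.map_cons,
      List.prod_cons, coeff_thetaShiftProd, List.map_ofFn, List.prod_ofFn, Function.comp]
    have hs := scalar_sum N α₁ hα b lam hroots m
    calc ∑ n ∈ range (N + 1), b n * (ascp (α₁ + n) m * (αs.map fun x => ascp x m).prod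
            / ((γs.map fun x => ascp x m).prod * (m.factorial : ℂ)))
        = (∑ n ∈ range (N + 1), b n * ascp (α₁ + n) m) * ((αs.map fun x => ascp x m).prod
            / ((γs.map fun x => ascp x m).prod * (m.factorial : ℂ))) := by
          rw [Finset.sum_mul]
          exact Finset.sum_congr rfl fun n _ => by ring
      _ = _ := by rw [hs]; ring
  refine ⟨h1, fun hlam => ?_⟩
  rw [h1]
  apply PowerSeries.ext
  intro m
  have hQ : (γs.map fun x => ascp x m).prod ≠ 0 := by
    apply List.prod_ne_zero
    intro hmem
    rcases List.mem_map.mp hmem with ⟨γ, hγs, hγ0⟩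
    exact ascp_ne_zero (hγ γ hγs) m hγ0
  have hfact : ((m.factorial : ℕ) : ℂ) ≠ 0 := Nat.cast_ne_zero.mpr m.factorial_ne_zero
  have hD : (∏ i : Fin N, ascp (lam i) m) ≠ 0 :=
    Finset.prod_ne_zero_iff.mpr fun i _ => ascp_ne_zero (hlam i) m
  have hprod : (∏ i : Fin N, lam i) * ∏ i : Fin N, ascp (lam i + 1) m
      = (∏ i : Fin N, ascp (lam i) m) * ∏ i : Fin N, ((m : ℂ) + lam i) := by
    rw [← Finset.prod_mul_distrib, ← Finset.prod_mul_distrib]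
    refine Finset.prod_congr rfl fun i _ => ?_
    have ha := ascp_succ (lam i) m
    have hb := ascp_left (lam i) m
    linear_combination ha - hb
  simp only [PowerSeries.coeff_C_mul, coeff_thetaShiftProd, pFq, PowerSeries.coeff_mk,
    List.map_append, List.prod_append, List.map_cons, List.prod_cons, List.map_map,
    List.map_ofFn, List.prod_ofFn, Function.comp]
  have hαN : ascp α₁ N ≠ 0 := ascp_ne_zero hα N
  field_simp
  linear_combination (-(ascp α₁ m * (αs.map fun x => ascp x m).prod)) * hprod
end
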